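/- Fix an integer N ≥ 2 and a real p with 1/2 ≤ p < 1; set q = 1 − p. Let h : {0,…,N} → ℝ be the unique solution of the win-probability system for the timid strategy (S(i) = 1 for all i). Then for every strategy S and every solution L : {0,…,N} → ℝ of the win-probability system for S, one has L(i) ≤ h(i) for every 0 ≤ i ≤ N. -/

import Mathlib

/-- Dubins–Savage optimality of timid play in a superfair casino
(`1/2 ≤ p < 1`), restricted to stationary strategies: if `h` solves the
win-probability system for the timid strategy (stake `1` everywhere) and `L`
solves the win-probability system for any stationary strategy `S`, then
`L i ≤ h i` for all `0 ≤ i ≤ N`. -/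
theorem timid_play_optimal_superfair
    (N : ℕ) (hN : 2 ≤ N) (p q : ℝ)
    (hp0 : 1 / 2 ≤ p) (hp1 : p < 1) (hq : q = 1 - p)
    (h : ℕ → ℝ) (hh0 : h 0 = 0) (hhN : h N = 1)
    (hhrec : ∀ i : ℕ, 1 ≤ i → i ≤ N - 1 →
      h i = q * h (i - 1) + p * h (i + 1))
    (S : ℕ → ℕ)
    (hS : ∀ i : ℕ, 1 ≤ i → i ≤ N - 1 → 1 ≤ S i ∧ S i ≤ min i (N - i))
    (L : ℕ → ℝ) (hL0 : L 0 = 0) (hLN : L N = 1)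
    (hLrec : ∀ i : ℕ, 1 ≤ i → i ≤ N - 1 →
      L i = q * L (i - S i) + p * L (i + S i)) :
    ∀ i : ℕ, i ≤ N → L i ≤ h i := by
  have hp : 0 < p := by linarith
  have hq0 : 0 < q := by rw [hq]; linarith
  have hqp : q ≤ p := by rw [hq]; linarith
  set r : ℝ := q / p with hr
  have hr0 : 0 ≤ r := by positivity
  have hr1 : r ≤ 1 := by rw [hr, div_le_one hp]; exact hqp
  have hpr : p * r = q := by rw [hr]; field_simp [hp.ne']
  -- geometric increments
  have hd : ∀ i : ℕ, i ≤ N - 1 → h (i + 1) - h i = r ^ i * h 1 := by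
    intro i
    induction i with
    | zero => intro _; simp [hh0]
    | succ n ih =>
      intro hn
      have hrec := hhrec (n + 1) (by omega) hn
      simp only [Nat.add_sub_cancel] at hrec
      have hprev := ih (by omega)
      have key : p * (h (n + 1 + 1) - h (n + 1)) = q * (h (n + 1) - h n) := by
        linear_combination -hrec - h (n + 1) * hq
      have hthis : h (n + 1 + 1) - h (n + 1) = r * (h (n + 1) - h n) := by
        rw [hr, div_mul_eq_mul_div, eq_div_iff hp.ne']
        linarith [key]
      calc h (n + 1 + 1) - h (n + 1) = r * (h (n + 1) - h n) := hthis
        _ = r * (r ^ n * h 1) := by rw [hprev]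
        _ = r ^ (n + 1) * h 1 := by ring
  -- closed form
  have hsum : ∀ j : ℕ, j ≤ N → h j = (∑ k ∈ Finset.range j, r ^ k) * h 1 := by
    intro j
    induction j with
    | zero => intro _; simp [hh0]
    | succ n ih =>
      intro hn
      have h1 := ih (by omega)
      have h2 := hd n (by omega)
      have h2' : h (n + 1) = h n + r ^ n * h 1 := by linarith
      rw [Finset.sum_range_succ, h2', h1]; ring
  have hGpos : ∀ j : ℕ, 1 ≤ j → 0 < ∑ k ∈ Finset.range j, r ^ k := by
    intro j hj
    apply Finset.sum_pos'
    · intro k _; positivity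
    · exact ⟨0, Finset.mem_range.mpr (by omega), by norm_num⟩
  have h1pos : 0 < h 1 := by
    have hN' := hsum N (le_refl N)
    rw [hhN] at hN'
    have hG := hGpos N (by omega)
    nlinarith
  -- superharmonicity of h
  have superh : ∀ i s : ℕ, 1 ≤ s → s ≤ i → i + s ≤ N →
      q * h (i - s) + p * h (i + s) ≤ h i := by
    intro i s hs1 hsi hsN
    rw [hsum (i - s) (by omega), hsum (i + s) (by omega), hsum i (by omega)]
    have hpq1 : p + q = 1 := by rw [hq]; ring
    set Gis := ∑ k ∈ Finset.range (i - s), r ^ k with hGis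
    set Gi := ∑ k ∈ Finset.range i, r ^ k with hGi
    set Gips := ∑ k ∈ Finset.range (i + s), r ^ k with hGips
    set X := ∑ j ∈ Finset.range s, r ^ ((i - s) + j) with hX
    set Y := ∑ j ∈ Finset.range s, r ^ (i + j) with hY
    have G1 : Gi = Gis + X := by
      rw [hGi, hGis, hX]
      have e1 : i = (i - s) + s := by omega
      conv_lhs => rw [e1]
      exact Finset.sum_range_add _ _ _
    have G2 : Gips = Gi + Y := by
      rw [hGips, hGi, hY]
      exact Finset.sum_range_add _ _ _
    have term : ∀ j ∈ Finset.range s, p * r ^ (i + j) ≤ q * r ^ ((i - s) + j) := by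
      intro j _
      have e : q * r ^ ((i - s) + j) = p * r ^ ((i - s) + j + 1) := by
        rw [pow_succ, ← hpr]; ring
      rw [e]
      have hle : r ^ (i + j) ≤ r ^ ((i - s) + j + 1) :=
        pow_le_pow_of_le_one hr0 hr1 (by omega)
      nlinarith
    have hsums : ∑ j ∈ Finset.range s, p * r ^ (i + j)
        ≤ ∑ j ∈ Finset.range s, q * r ^ ((i - s) + j) := Finset.sum_le_sum term
    have hpY : p * Y = ∑ j ∈ Finset.range s, p * r ^ (i + j) := by
      rw [hY, Finset.mul_sum]
    have hqX : q * X = ∑ j ∈ Finset.range s, q * r ^ ((i - s) + j) := by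
      rw [hX, Finset.mul_sum]
    have hYX : p * Y ≤ q * X := by rw [hpY, hqX]; exact hsums
    have hid : q * Gis + p * Gips = (Gis + X) + (p * Y - q * X) := by
      rw [G2, G1]
      linear_combination (Gis + X) * hpq1
    have key : q * Gis + p * Gips ≤ Gi := by
      rw [G1]; linarith [hid, hYX]
    nlinarith [mul_le_mul_of_nonneg_right key h1pos.le]
  -- maximum principle for D = L - h
  classical
  set F : Finset ℕ := Finset.range (N + 1) with hF
  have hFne : F.Nonempty := ⟨0, by simp [hF]⟩
  obtain ⟨m, hmF, hmax⟩ := F.exists_max_image (fun i => L i - h i) hFne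
  set W : Finset ℕ := F.filter (fun i => L m - h m ≤ L i - h i) with hW
  have hWne : W.Nonempty := ⟨m, by simp [hW, hmF]⟩
  set i0 : ℕ := W.max' hWne with hi0
  have hi0W : i0 ∈ W := W.max'_mem hWne
  have hi0N : i0 ≤ N := by
    have := (Finset.mem_filter.mp hi0W).1
    simpa [hF, Nat.lt_succ_iff] using this
  have hi0max : L m - h m ≤ L i0 - h i0 := (Finset.mem_filter.mp hi0W).2
  have hDle : ∀ j : ℕ, j ≤ N → L j - h j ≤ L i0 - h i0 := by
    intro j hj
    have := hmax j (by simp [hF, Nat.lt_succ_iff, hj])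
    linarith
  -- show the max value is 0
  have hM0 : L i0 - h i0 ≤ 0 := by
    by_cases h0 : i0 = 0
    · rw [h0, hL0, hh0]; simp
    by_cases hNN : i0 = N
    · rw [hNN, hLN, hhN]; simp
    exfalso
    have hi1 : 1 ≤ i0 := by omega
    have hi2 : i0 ≤ N - 1 := by omega
    obtain ⟨hs1, hs2⟩ := hS i0 hi1 hi2
    have hsi : S i0 ≤ i0 := le_trans hs2 (min_le_left _ _)
    have hsN : i0 + S i0 ≤ N := by
      have := le_trans hs2 (min_le_right _ _); omega
    have hrecL := hLrec i0 hi1 hi2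
    have hsh := superh i0 (S i0) hs1 hsi hsN
    have hDdown := hDle (i0 - S i0) (by omega)
    have hDup := hDle (i0 + S i0) (by omega)
    have hpq1 : p + q = 1 := by rw [hq]; ring
    have key : L i0 - h i0 ≤ q * (L (i0 - S i0) - h (i0 - S i0))
        + p * (L (i0 + S i0) - h (i0 + S i0)) := by
      nlinarith [hrecL, hsh]
    have h1' : q * (L (i0 - S i0) - h (i0 - S i0)) ≤ q * (L i0 - h i0) :=
      mul_le_mul_of_nonneg_left hDdown hq0.le
    have e : p * (L i0 - h i0) + q * (L i0 - h i0) = L i0 - h i0 := by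
      rw [hq]; ring
    have h2' : p * (L i0 - h i0) ≤ p * (L (i0 + S i0) - h (i0 + S i0)) := by
      linarith [key, h1', e]
    have hup_eq : L i0 - h i0 ≤ L (i0 + S i0) - h (i0 + S i0) :=
      le_of_mul_le_mul_left h2' hp
    have hmem : i0 + S i0 ∈ W := by
      rw [hW, Finset.mem_filter]
      refine ⟨by simp [hF, Nat.lt_succ_iff, hsN], ?_⟩
      linarith
    have := W.le_max' _ hmem
    omega
  intro i hi
  have := hDle i hi
  linarith
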